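/- Let α be a non-zero algebraic integer of degree d which is not a root of unity, with conjugates α_1, …, α_d, and suppose that ℚ(α^p) = ℚ(α) for all primes p. Let p_1 < … < p_s be the first s primes and set p_0 = 1. Then the d(s+1) complex numbers α_i^{p_ℓ}, for 1 ≤ i ≤ d and 0 ≤ ℓ ≤ s, are pairwise distinct: α_i^{p_k} = α_j^{p_ℓ} implies i = j and k = ℓ. -/

import Mathlib

open Polynomial

namespace PowersOfConjugatesAux

open IntermediateField

/-- Every root of the minimal polynomial is one of the listed conjugates. -/
lemma hroot_aux {α : ℂ} {d : ℕ} {αs : Fin d → ℂ}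
    (hconj : (minpoly ℚ α).map (algebraMap ℚ ℂ) = ∏ i, (X - C (αs i)))
    {z : ℂ} (hz : (Polynomial.aeval z) (minpoly ℚ α) = 0) : ∃ m, z = αs m := by
  have h0 : Polynomial.eval z ((minpoly ℚ α).map (algebraMap ℚ ℂ)) = 0 := by
    rwa [Polynomial.eval_map, ← Polynomial.aeval_def]
  rw [hconj, Polynomial.eval_prod] at h0
  obtain ⟨m, -, hm⟩ := Finset.prod_eq_zero_iff.mp h0
  exact ⟨m, by simpa [sub_eq_zero] using hm⟩

/-- Every listed conjugate is a root of the minimal polynomial. -/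
lemma hisroot_aux {α : ℂ} {d : ℕ} {αs : Fin d → ℂ}
    (hconj : (minpoly ℚ α).map (algebraMap ℚ ℂ) = ∏ i, (X - C (αs i)))
    (m : Fin d) : (Polynomial.aeval (αs m)) (minpoly ℚ α) = 0 := by
  have h0 : Polynomial.eval (αs m) (∏ i, (X - C (αs i))) = 0 := by
    rw [Polynomial.eval_prod]
    exact Finset.prod_eq_zero (Finset.mem_univ m) (by simp)
  rw [← hconj, Polynomial.eval_map, ← Polynomial.aeval_def] at h0
  exact h0

/-- The conjugates are pairwise distinct. -/
lemma alphas_injective {α : ℂ} (hint : IsIntegral ℤ α) {d : ℕ} {αs : Fin d → ℂ}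
    (hconj : (minpoly ℚ α).map (algebraMap ℚ ℂ) = ∏ i, (X - C (αs i))) :
    Function.Injective αs := by
  have hQ : IsIntegral ℚ α := hint.tower_top
  have hsep : ((minpoly ℚ α).map (algebraMap ℚ ℂ)).Separable :=
    ((minpoly.irreducible hQ).separable).map
  rw [hconj] at hsep
  exact separable_prod_X_sub_C_iff.mp hsep

/-- If `ℚ(α^p) = ℚ(α)`, then taking `p`-th powers is injective on the conjugates. -/
lemma pow_injective {α : ℂ} (hint : IsIntegral ℤ α) {d : ℕ}
    (hd : (minpoly ℚ α).natDegree = d) {αs : Fin d → ℂ}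
    (hroot : ∀ z : ℂ, (Polynomial.aeval z) (minpoly ℚ α) = 0 → ∃ m, z = αs m)
    (hisroot : ∀ m, (Polynomial.aeval (αs m)) (minpoly ℚ α) = 0)
    (p : ℕ)
    (hfield : IntermediateField.adjoin ℚ {α ^ p} = IntermediateField.adjoin ℚ {α}) :
    Function.Injective (fun m => αs m ^ p) := by
  have hQ : IsIntegral ℚ α := hint.tower_top
  have hQp : IsIntegral ℚ (α ^ p) := hQ.pow p
  set g := minpoly ℚ (α ^ p) with hg
  -- degree of g is d
  have hdeg : g.natDegree = d := by
    have h1 : g.natDegree = Module.finrank ℚ ℚ⟮α ^ p⟯ := (adjoin.finrank hQp).symm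
    have h2 : Module.finrank ℚ ℚ⟮α ^ p⟯ = Module.finrank ℚ ℚ⟮α⟯ := by
      rw [show ℚ⟮α ^ p⟯ = ℚ⟮α⟯ from hfield]
    rw [h1, h2, adjoin.finrank hQ, hd]
  -- every αs m ^ p is a root of g
  have hdvd : minpoly ℚ α ∣ g.comp (X ^ p) := by
    apply minpoly.dvd
    rw [aeval_comp, map_pow, aeval_X]
    exact minpoly.aeval ℚ (α ^ p)
  have hmemroot : ∀ m : Fin d, (Polynomial.aeval (αs m ^ p)) g = 0 := by
    intro m
    obtain ⟨q, hq⟩ := hdvd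
    have := hisroot m
    have h0 : (Polynomial.aeval (αs m)) (g.comp (X ^ p)) = 0 := by
      rw [hq, map_mul, this, zero_mul]
    rwa [aeval_comp, map_pow, aeval_X] at h0
  -- surjectivity: every root of g is αs m ^ p for some m
  have hsurj : ∀ β : ℂ, (Polynomial.aeval β) g = 0 → ∃ m, β = αs m ^ p := by
    intro β hβ
    have hmem : β ∈ g.aroots ℂ := by rw [mem_aroots]; exact ⟨minpoly.ne_zero hQp, hβ⟩
    obtain ⟨φ, hφ⟩ : ∃ φ : ℚ⟮α ^ p⟯ →ₐ[ℚ] ℂ, φ (AdjoinSimple.gen ℚ (α ^ p)) = β :=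
      ⟨(algHomAdjoinIntegralEquiv ℚ hQp).symm ⟨β, hmem⟩,
        algHomAdjoinIntegralEquiv_symm_apply_gen ℚ hQp _⟩
    set ψ : ℚ⟮α⟯ →ₐ[ℚ] ℂ := φ.comp (equivOfEq hfield.symm : ℚ⟮α⟯ ≃ₐ[ℚ] ℚ⟮α ^ p⟯).toAlgHom
      with hψ
    have hψroot : (Polynomial.aeval (ψ (AdjoinSimple.gen ℚ α))) (minpoly ℚ α) = 0 := by
      rw [Polynomial.aeval_algHom_apply]
      erw [aeval_gen_minpoly]
      rw [map_zero]
    obtain ⟨m, hm⟩ := hroot _ hψroot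
    refine ⟨m, ?_⟩
    have hgen : (equivOfEq hfield.symm) ((AdjoinSimple.gen ℚ α) ^ p)
        = AdjoinSimple.gen ℚ (α ^ p) := by
      apply Subtype.ext
      simp [equivOfEq_apply]
    calc β = φ (AdjoinSimple.gen ℚ (α ^ p)) := hφ.symm
      _ = ψ ((AdjoinSimple.gen ℚ α) ^ p) := by rw [hψ, ← hgen]; rfl
      _ = (ψ (AdjoinSimple.gen ℚ α)) ^ p := by rw [map_pow]
      _ = αs m ^ p := by rw [← hm]
  -- counting
  classical
  set T := (g.aroots ℂ).toFinset with hT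
  have hnodup : (g.aroots ℂ).Nodup := by
    rw [aroots_def]
    exact nodup_roots ((minpoly.irreducible hQp).separable.map)
  have hTcard : T.card = d := by
    rw [hT, Multiset.toFinset_card_of_nodup hnodup]
    rw [aroots_def]
    rw [← (IsAlgClosed.splits (g.map (algebraMap ℚ ℂ))).natDegree_eq_card_roots, natDegree_map, hdeg]
  set S := Finset.image (fun m => αs m ^ p) Finset.univ with hS
  have hST : S ⊆ T := by
    intro z hz
    rw [hS, Finset.mem_image] at hz
    obtain ⟨m, -, rfl⟩ := hz
    rw [hT, Multiset.mem_toFinset, mem_aroots]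
    exact ⟨minpoly.ne_zero hQp, hmemroot m⟩
  have hTS : T ⊆ S := by
    intro z hz
    rw [hT, Multiset.mem_toFinset, mem_aroots] at hz
    obtain ⟨m, rfl⟩ := hsurj z hz.2
    exact Finset.mem_image_of_mem _ (Finset.mem_univ m)
  have hSeq : S = T := Finset.Subset.antisymm hST hTS
  have hcard : (Finset.image (fun m => αs m ^ p) (Finset.univ : Finset (Fin d))).card
      = (Finset.univ : Finset (Fin d)).card := by
    rw [← hS, hSeq, hTcard, Finset.card_univ, Fintype.card_fin]
  have hinj := Finset.card_image_iff.mp hcard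
  intro a b hab
  exact hinj (Finset.mem_univ a) (Finset.mem_univ b) hab

/-- A multiplicative relation between two conjugates propagates, by conjugation,
to a relation involving any prescribed conjugate on the left. -/
lemma conj_rel {α : ℂ} (hint : IsIntegral ℤ α) {d : ℕ} {αs : Fin d → ℂ}
    (hroot : ∀ z : ℂ, (Polynomial.aeval z) (minpoly ℚ α) = 0 → ∃ m, z = αs m)
    (hisroot : ∀ m, (Polynomial.aeval (αs m)) (minpoly ℚ α) = 0)
    (i j : Fin d) (a b : ℕ) (h : αs i ^ a = αs j ^ b) (m : Fin d) :
    ∃ n : Fin d, αs m ^ a = αs n ^ b := by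
  classical
  have hQ : IsIntegral ℚ α := hint.tower_top
  have hmono : (minpoly ℚ α).Monic := minpoly.monic hQ
  have hminpi : minpoly ℚ (αs i) = minpoly ℚ α :=
    (minpoly.eq_of_irreducible_of_monic (minpoly.irreducible hQ) (hisroot i) hmono).symm
  set S : Set ℂ := {αs i, αs j} with hSdef
  have hK : ∀ s ∈ S, IsIntegral ℚ s ∧ ((minpoly ℚ s).map (algebraMap ℚ ℂ)).Splits := by
    intro s hs
    have hsI : IsIntegral ℚ s := by
      rcases hs with rfl | hs
      · exact ⟨minpoly ℚ α, hmono, hisroot i⟩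
      · rcases hs with rfl
        exact ⟨minpoly ℚ α, hmono, hisroot j⟩
    exact ⟨hsI, IsAlgClosed.splits _⟩
  have hx : αs i ∈ adjoin ℚ S := subset_adjoin ℚ S (by left; rfl)
  have hy : (Polynomial.aeval (αs m)) (minpoly ℚ (αs i)) = 0 := by
    rw [hminpi]; exact hisroot m
  obtain ⟨φ, hφ⟩ := exists_algHom_adjoin_of_splits_of_aeval hK hx hy
  have hjmem : αs j ∈ adjoin ℚ S := subset_adjoin ℚ S (by right; rfl)
  set xj : adjoin ℚ S := ⟨αs j, hjmem⟩ with hxj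
  have hxjroot : (Polynomial.aeval xj) (minpoly ℚ α) = 0 := by
    apply (algebraMap (adjoin ℚ S) ℂ).injective
    rw [map_zero, ← Polynomial.aeval_algebraMap_apply]
    exact hisroot j
  have hσxjroot : (Polynomial.aeval (φ xj)) (minpoly ℚ α) = 0 := by
    rw [Polynomial.aeval_algHom_apply, hxjroot, map_zero]
  obtain ⟨n, hn⟩ := hroot _ hσxjroot
  refine ⟨n, ?_⟩
  have hpow : (⟨αs i, hx⟩ : adjoin ℚ S) ^ a = xj ^ b := by
    apply Subtype.ext
    push_cast
    exact h
  calc αs m ^ a = (φ ⟨αs i, hx⟩) ^ a := by rw [hφ]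
    _ = φ ((⟨αs i, hx⟩ : adjoin ℚ S) ^ a) := (map_pow φ _ a).symm
    _ = φ (xj ^ b) := by rw [hpow]
    _ = (φ xj) ^ b := map_pow φ xj b
    _ = αs n ^ b := by rw [← hn]

/-- The product of the absolute values of the conjugates of a nonzero algebraic
integer is at least 1. -/
lemma one_le_prod_norm {α : ℂ} (hα : α ≠ 0) (hint : IsIntegral ℤ α) {d : ℕ}
    {αs : Fin d → ℂ}
    (hconj : (minpoly ℚ α).map (algebraMap ℚ ℂ) = ∏ i, (X - C (αs i))) :
    1 ≤ ∏ m, ‖αs m‖ := by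
  have hQ : IsIntegral ℚ α := hint.tower_top
  have heval := congrArg (Polynomial.eval 0) hconj
  rw [Polynomial.eval_map, ← Polynomial.aeval_def] at heval
  have hL : (Polynomial.aeval (0 : ℂ)) (minpoly ℚ α)
      = algebraMap ℚ ℂ ((minpoly ℚ α).coeff 0) := by
    rw [Polynomial.aeval_def, ← Polynomial.eval_map, ← Polynomial.coeff_zero_eq_eval_zero,
      Polynomial.coeff_map]
  have hR : Polynomial.eval 0 (∏ i, (X - C (αs i))) = ∏ i, (-αs i) := by
    rw [Polynomial.eval_prod]
    exact Finset.prod_congr rfl fun i _ => by simp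
  rw [hL, hR] at heval
  have hZQ := minpoly.isIntegrallyClosed_eq_field_fractions' ℚ hint
  set c : ℤ := (minpoly ℤ α).coeff 0 with hc
  have hcoeff : (minpoly ℚ α).coeff 0 = (c : ℚ) := by
    rw [hZQ, Polynomial.coeff_map]; rfl
  have hc0 : c ≠ 0 := by
    have := minpoly.coeff_zero_ne_zero hQ hα
    rw [hcoeff] at this
    exact_mod_cast this
  have h1c : (1 : ℝ) ≤ |(c : ℝ)| := by
    rw [← Int.cast_abs]
    exact_mod_cast Int.one_le_abs hc0
  calc (1:ℝ) ≤ |(c : ℝ)| := h1c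
    _ = ‖algebraMap ℚ ℂ ((minpoly ℚ α).coeff 0)‖ := by
        rw [hcoeff]
        simp [Complex.norm_intCast]
    _ = ‖∏ i, (-αs i)‖ := by rw [heval]
    _ = ∏ i, ‖αs i‖ := by
        rw [norm_prod]
        exact Finset.prod_congr rfl fun i _ => norm_neg _

/-- Kronecker: if all conjugates have absolute value 1, then α is a root of unity. -/
lemma kronecker {α : ℂ} (hint : IsIntegral ℤ α) {d : ℕ} {αs : Fin d → ℂ}
    (hroot : ∀ z : ℂ, (Polynomial.aeval z) (minpoly ℚ α) = 0 → ∃ m, z = αs m)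
    (hnorm1 : ∀ m, ‖αs m‖ = 1) :
    ∃ n : ℕ, 0 < n ∧ α ^ n = 1 := by
  have hQ : IsIntegral ℚ α := hint.tower_top
  set K : IntermediateField ℚ ℂ := ℚ⟮α⟯ with hK
  haveI : FiniteDimensional ℚ K := adjoin.finiteDimensional hQ
  haveI : NumberField K := ⟨⟩
  set x : K := AdjoinSimple.gen ℚ α with hx
  have hxint : IsIntegral ℤ x := by
    have hax : algebraMap K ℂ x = α := rfl
    rw [← isIntegral_algebraMap_iff (algebraMap K ℂ).injective, hax]
    exact hint
  have hnorm : ∀ φ : K →+* ℂ, ‖φ x‖ = 1 := by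
    intro φ
    let φ' : K →ₐ[ℚ] ℂ := φ.toRatAlgHom
    have hr : (Polynomial.aeval (φ' x)) (minpoly ℚ α) = 0 := by
      rw [Polynomial.aeval_algHom_apply]
      erw [aeval_gen_minpoly]
      rw [map_zero]
    obtain ⟨m, hm⟩ := hroot _ hr
    have hfx : φ x = αs m := hm
    rw [hfx]
    exact hnorm1 m
  obtain ⟨n, hn, hxn⟩ := NumberField.Embeddings.pow_eq_one_of_norm_eq_one K ℂ hxint hnorm
  refine ⟨n, hn, ?_⟩
  have := congrArg (algebraMap K ℂ) hxn
  rw [map_pow, map_one] at this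
  exact this

end PowersOfConjugatesAux

/-- Let `α` be a non-zero algebraic integer of degree `d` which is not a root of
unity, with conjugates `α₁, …, α_d`, and suppose `ℚ(α^p) = ℚ(α)` for all primes `p`.
Let `p₁ < ⋯ < p_s` be the first `s` primes and `p₀ = 1`.  Then the `d(s+1)` numbers
`αᵢ^{p_ℓ}` (for `1 ≤ i ≤ d`, `0 ≤ ℓ ≤ s`) are pairwise distinct:
`αᵢ^{p_k} = αⱼ^{p_ℓ}` implies `i = j` and `k = ℓ`. -/
theorem powers_of_conjugates_distinct
    (α : ℂ) (hα : α ≠ 0) (hint : IsIntegral ℤ α)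
    (hunit : ¬∃ n : ℕ, 0 < n ∧ α ^ n = 1)
    (d : ℕ) (hd : (minpoly ℚ α).natDegree = d)
    (αs : Fin d → ℂ)
    (hconj : (minpoly ℚ α).map (algebraMap ℚ ℂ)
      = ∏ i, (Polynomial.X - Polynomial.C (αs i)))
    (hfields : ∀ p : ℕ, p.Prime →
      IntermediateField.adjoin ℚ {α ^ p} = IntermediateField.adjoin ℚ {α})
    (s : ℕ) (P : Fin (s + 1) → ℕ)
    (hP0 : P 0 = 1)
    (hP : ∀ ℓ : Fin (s + 1), (ℓ : ℕ) ≠ 0 → P ℓ = Nat.nth Nat.Prime ((ℓ : ℕ) - 1))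
    (i j : Fin d) (k l : Fin (s + 1))
    (h : αs i ^ P k = αs j ^ P l) :
    i = j ∧ k = l := by
  classical
  have hQ : IsIntegral ℚ α := hint.tower_top
  have hroot : ∀ z : ℂ, (Polynomial.aeval z) (minpoly ℚ α) = 0 → ∃ m, z = αs m :=
    fun z hz => PowersOfConjugatesAux.hroot_aux hconj hz
  have hisroot : ∀ m, (Polynomial.aeval (αs m)) (minpoly ℚ α) = 0 :=
    PowersOfConjugatesAux.hisroot_aux hconj
  have hαsinj : Function.Injective αs := PowersOfConjugatesAux.alphas_injective hint hconj
  -- P is injective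
  have hPinj : Function.Injective P := by
    intro a b hab
    by_cases ha : (a : ℕ) = 0 <;> by_cases hb : (b : ℕ) = 0
    · exact Fin.ext (ha.trans hb.symm)
    · exfalso
      rw [show a = 0 from Fin.ext ha, hP0, hP b hb] at hab
      exact (Nat.prime_nth_prime _).one_lt.ne' hab.symm
    · exfalso
      rw [show b = 0 from Fin.ext hb, hP0, hP a ha] at hab
      exact (Nat.prime_nth_prime _).one_lt.ne' hab
    · rw [hP a ha, hP b hb] at hab
      have := Nat.nth_injective Nat.infinite_setOf_prime hab
      exact Fin.ext (by omega)
  by_cases hkl : k = l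
  · subst hkl
    refine ⟨?_, rfl⟩
    by_cases hk0 : (k : ℕ) = 0
    · have hPk : P k = 1 := by rw [show k = 0 from Fin.ext hk0, hP0]
      rw [hPk, pow_one, pow_one] at h
      exact hαsinj h
    · have hprime : (P k).Prime := by
        rw [hP k hk0]; exact Nat.prime_nth_prime _
      exact PowersOfConjugatesAux.pow_injective hint hd hroot hisroot (P k)
        (hfields _ hprime) h
  · exfalso
    have hab : P k ≠ P l := fun e => hkl (hPinj e)
    -- d is positive
    have hdpos : 0 < d := hd ▸ minpoly.natDegree_pos hQ
    have huniv : (Finset.univ : Finset (Fin d)).Nonempty :=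
      Finset.univ_nonempty_iff.mpr (Fin.pos_iff_nonempty.mp hdpos)
    obtain ⟨m0, -, hm0⟩ := Finset.exists_max_image Finset.univ (fun m => ‖αs m‖) huniv
    set M : ℝ := ‖αs m0‖ with hM
    have hle : ∀ m, ‖αs m‖ ≤ M := fun m => hm0 m (Finset.mem_univ m)
    have hM0 : 0 ≤ M := norm_nonneg _
    have hprodge : 1 ≤ ∏ m, ‖αs m‖ :=
      PowersOfConjugatesAux.one_le_prod_norm hα hint hconj
    -- M ≥ 1
    have hM1 : 1 ≤ M := by
      by_contra hMlt
      push_neg at hMlt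
      have h1 : ∏ m, ‖αs m‖ ≤ ∏ _m : Fin d, M :=
        Finset.prod_le_prod (fun m _ => norm_nonneg _) (fun m _ => hle m)
      rw [Finset.prod_const, Finset.card_univ, Fintype.card_fin] at h1
      have h2 : M ^ d < 1 := pow_lt_one₀ hM0 hMlt (Nat.pos_iff_ne_zero.mp hdpos)
      linarith
    -- the key inequality
    have key : ∀ (i' j' : Fin d) (a b : ℕ), αs i' ^ a = αs j' ^ b → M ^ a ≤ M ^ b := by
      intro i' j' a b hrel
      obtain ⟨n, hn⟩ := PowersOfConjugatesAux.conj_rel hint hroot hisroot i' j' a b hrel m0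
      calc M ^ a = ‖αs m0 ^ a‖ := by rw [norm_pow]
        _ = ‖αs n ^ b‖ := by rw [hn]
        _ = ‖αs n‖ ^ b := norm_pow _ _
        _ ≤ M ^ b := pow_le_pow_left₀ (norm_nonneg _) (hle n) b
    have hMeq : M ^ P k = M ^ P l :=
      le_antisymm (key i j _ _ h) (key j i _ _ h.symm)
    -- hence M = 1
    have hMone : M = 1 := by
      rcases eq_or_lt_of_le hM1 with heq | hlt
      · exact heq.symm
      · exfalso
        rcases Nat.lt_trichotomy (P k) (P l) with hlt' | heq' | hgt'
        · exact absurd hMeq (ne_of_lt (pow_lt_pow_right₀ hlt hlt'))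
        · exact hab heq'
        · exact absurd hMeq.symm (ne_of_lt (pow_lt_pow_right₀ hlt hgt'))
    -- all conjugates have absolute value 1
    have hall : ∀ m, ‖αs m‖ = 1 := by
      intro m
      by_contra hne
      have hlt : ‖αs m‖ < 1 := lt_of_le_of_ne (hMone ▸ hle m) hne
      have hsplit : ∏ m', ‖αs m'‖ = (∏ m' ∈ Finset.univ \ {m}, ‖αs m'‖) * ‖αs m‖ :=
        Finset.prod_eq_prod_diff_singleton_mul (Finset.mem_univ m) _
      have hrest : (∏ m' ∈ Finset.univ \ {m}, ‖αs m'‖) ≤ 1 :=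
        Finset.prod_le_one (fun m' _ => norm_nonneg _) (fun m' _ => hMone ▸ hle m')
      have : ∏ m', ‖αs m'‖ < 1 := by
        rw [hsplit]
        calc (∏ m' ∈ Finset.univ \ {m}, ‖αs m'‖) * ‖αs m‖ ≤ 1 * ‖αs m‖ :=
              mul_le_mul_of_nonneg_right hrest (norm_nonneg _)
          _ = ‖αs m‖ := one_mul _
          _ < 1 := hlt
      linarith
    exact hunit (PowersOfConjugatesAux.kronecker hint hroot hall)
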